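/- Assume det l(ξ) ≠ 0 for all ξ ∈ ℝ and that ‖l⁻¹‖_{M₁} and ‖l⁻¹‖_{M₂} are finite. Then for every u = (u₁,u₂) ∈ H, the function g(u) is essentially bounded and ‖g(u)‖_{L^∞(ℝ)} ≤ ‖l⁻¹‖_{M₂} · ( κ₀ · ( κ₂·‖u‖_H + κ₃ ) + κ₄ ) · ‖u‖_H. -/

import Mathlib

open MeasureTheory Real
open scoped FourierTransform

noncomputable section

/-- Fourier transform `û(ξ) = ∫ u(x) e^{-2πixξ} dx` of a real-valued function on `ℝ`. -/
def rhat (f : ℝ → ℝ) : ℝ → ℂ :=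
  𝓕 (fun x => (f x : ℂ))

/-- `(1,1)` entry of the Thomas symbol `l(ξ)`. -/
def sym11 (ν lam₆ : ℝ) (ξ : ℝ) : ℝ := -ν * (2 * π * ξ) ^ 2 + lam₆ - 1

/-- `(2,2)` entry of the Thomas symbol `l(ξ)`. -/
def sym22 (ν₃ : ℝ) (ξ : ℝ) : ℝ := -(2 * π * ξ) ^ 2 - ν₃

/-- Determinant of the Thomas symbol `l(ξ)`. -/
def symDet (ν ν₃ lam₅ lam₆ lam₇ : ℝ) (ξ : ℝ) : ℝ :=
  sym11 ν lam₆ ξ * sym22 ν₃ ξ - lam₇ * lam₅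

/-- Squared Euclidean norm of `l(ξ) · (û₁(ξ), û₂(ξ))`. -/
def Hintegrand (ν ν₃ lam₅ lam₆ lam₇ : ℝ) (u₁ u₂ : ℝ → ℝ) (ξ : ℝ) : ℝ :=
  ‖(sym11 ν lam₆ ξ : ℂ) * rhat u₁ ξ + (lam₇ : ℂ) * rhat u₂ ξ‖ ^ 2 +
    ‖(lam₅ : ℂ) * rhat u₁ ξ + (sym22 ν₃ ξ : ℂ) * rhat u₂ ξ‖ ^ 2

/-- The `H`-norm `‖u‖_H = (∫ |l(ξ)·û(ξ)|² dξ)^{1/2}` of a pair `u = (u₁, u₂)`. -/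
def normH (ν ν₃ lam₅ lam₆ lam₇ : ℝ) (u₁ u₂ : ℝ → ℝ) : ℝ :=
  Real.sqrt (∫ ξ : ℝ, Hintegrand ν ν₃ lam₅ lam₆ lam₇ u₁ u₂ ξ)

/-- Membership of the pair `(u₁, u₂)` in the Hilbert space `H` (with the integrability
conditions making the Fourier integrals and the `H`-norm integral well defined). -/
def MemH (ν ν₃ lam₅ lam₆ lam₇ : ℝ) (u₁ u₂ : ℝ → ℝ) : Prop :=
  MemLp u₁ 2 volume ∧ MemLp u₂ 2 volume ∧
    Integrable u₁ volume ∧ Integrable u₂ volume ∧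
    Integrable (Hintegrand ν ν₃ lam₅ lam₆ lam₇ u₁ u₂) volume

/-- Entries of the inverse symbol `l(ξ)⁻¹`. -/
def inv11 (ν ν₃ lam₅ lam₆ lam₇ : ℝ) (ξ : ℝ) : ℝ :=
  sym22 ν₃ ξ / symDet ν ν₃ lam₅ lam₆ lam₇ ξ

def inv12 (ν ν₃ lam₅ lam₆ lam₇ : ℝ) (ξ : ℝ) : ℝ :=
  -lam₇ / symDet ν ν₃ lam₅ lam₆ lam₇ ξ

def inv21 (ν ν₃ lam₅ lam₆ lam₇ : ℝ) (ξ : ℝ) : ℝ :=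
  -lam₅ / symDet ν ν₃ lam₅ lam₆ lam₇ ξ

def inv22 (ν ν₃ lam₅ lam₆ lam₇ : ℝ) (ξ : ℝ) : ℝ :=
  sym11 ν lam₆ ξ / symDet ν ν₃ lam₅ lam₆ lam₇ ξ

/-- `M₁` is an upper bound for the Euclidean operator norms of the matrices `l(ξ)⁻¹`
(finiteness of `‖l⁻¹‖_{M₁}`). -/
def IsM1Bound (ν ν₃ lam₅ lam₆ lam₇ M₁ : ℝ) : Prop :=
  ∀ ξ a b : ℝ,
    Real.sqrt ((inv11 ν ν₃ lam₅ lam₆ lam₇ ξ * a + inv12 ν ν₃ lam₅ lam₆ lam₇ ξ * b) ^ 2 +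
        (inv21 ν ν₃ lam₅ lam₆ lam₇ ξ * a + inv22 ν ν₃ lam₅ lam₆ lam₇ ξ * b) ^ 2) ≤
      M₁ * Real.sqrt (a ^ 2 + b ^ 2)

/-- `M₂` is an upper bound for `max_i (Σ_j ‖(l⁻¹)_{ij}‖_{L²}²)^{1/2}`, together with the
square-integrability of the entries of `l(ξ)⁻¹` (finiteness of `‖l⁻¹‖_{M₂}`). -/
def IsM2Bound (ν ν₃ lam₅ lam₆ lam₇ M₂ : ℝ) : Prop :=
  Integrable (fun ξ : ℝ => inv11 ν ν₃ lam₅ lam₆ lam₇ ξ ^ 2) volume ∧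
  Integrable (fun ξ : ℝ => inv12 ν ν₃ lam₅ lam₆ lam₇ ξ ^ 2) volume ∧
  Integrable (fun ξ : ℝ => inv21 ν ν₃ lam₅ lam₆ lam₇ ξ ^ 2) volume ∧
  Integrable (fun ξ : ℝ => inv22 ν ν₃ lam₅ lam₆ lam₇ ξ ^ 2) volume ∧
  Real.sqrt ((∫ ξ : ℝ, inv11 ν ν₃ lam₅ lam₆ lam₇ ξ ^ 2) +
      ∫ ξ : ℝ, inv12 ν ν₃ lam₅ lam₆ lam₇ ξ ^ 2) ≤ M₂ ∧
  Real.sqrt ((∫ ξ : ℝ, inv21 ν ν₃ lam₅ lam₆ lam₇ ξ ^ 2) +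
      ∫ ξ : ℝ, inv22 ν ν₃ lam₅ lam₆ lam₇ ξ ^ 2) ≤ M₂

end

/-- The nonpolynomial Thomas nonlinearity
`g(u)(x) = −(λ₃u₁² + λ₄u₁ − ν₁u₁u₂ − ν₁λ₁u₂)/(1 + u₁ + λ₁ + ν₂(u₁+λ₁)²) − λ₆u₁ − λ₇u₂`. -/
noncomputable def gfun (ν₁ ν₂ lam₁ lam₃ lam₄ lam₆ lam₇ : ℝ) (u₁ u₂ : ℝ → ℝ) (x : ℝ) : ℝ :=
  -(lam₃ * u₁ x ^ 2 + lam₄ * u₁ x - ν₁ * u₁ x * u₂ x - ν₁ * lam₁ * u₂ x) /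
      (1 + u₁ x + lam₁ + ν₂ * (u₁ x + lam₁) ^ 2)
    - lam₆ * u₁ x - lam₇ * u₂ x


open MeasureTheory Real Filter
open scoped FourierTransform SchwartzMap ContDiff

section AuxInversion

noncomputable def mySchwartz (g : ℝ → ℝ) (hg : ContDiff ℝ ∞ g) (h'g : HasCompactSupport g) :
    𝓢(ℝ, ℂ) where
  toFun := fun x => (g x : ℂ)
  smooth' := Complex.ofRealCLM.contDiff.comp hg
  decay' := by
    intro k n
    have hgC : ContDiff ℝ ∞ (fun x => (g x : ℂ)) := Complex.ofRealCLM.contDiff.comp hg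
    have hsupp : HasCompactSupport (fun x => (g x : ℂ)) :=
      h'g.comp_left (g := fun r : ℝ => (r : ℂ)) (by simp)
    have hsupp' : HasCompactSupport (iteratedFDeriv ℝ n (fun x => (g x : ℂ))) :=
      hsupp.iteratedFDeriv n
    have hcont : Continuous (fun x => ‖x‖ ^ k * ‖iteratedFDeriv ℝ n (fun y => (g y : ℂ)) x‖) := by
      have := (hgC.continuous_iteratedFDeriv (m := n) (by exact_mod_cast le_top)).norm
      fun_prop
    have hsupp'' : HasCompactSupport
        (fun x => ‖x‖ ^ k * ‖iteratedFDeriv ℝ n (fun y => (g y : ℂ)) x‖) :=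
      (hsupp'.norm).mul_left
    obtain ⟨C, hC⟩ := hsupp''.exists_bound_of_continuous hcont
    exact ⟨C, fun x => (Real.le_norm_self _).trans (hC x)⟩

lemma innerL_flip : (innerₗ ℝ).flip = innerₗ ℝ := by
  refine LinearMap.ext fun x => LinearMap.ext fun y => ?_
  simpa using real_inner_comm y x

lemma fourier_flip {a b : ℝ → ℂ} (ha : Integrable a) (hb : Integrable b) :
    ∫ ξ, 𝓕 a ξ * b ξ = ∫ x, a x * 𝓕 b x := by
  have := VectorFourier.integral_fourierIntegral_smul_eq_flip (L := innerₗ ℝ)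
    Real.continuous_fourierChar continuous_inner ha hb
  rw [innerL_flip] at this
  simp only [smul_eq_mul] at this
  exact this

lemma cont_fourier {f : ℝ → ℂ} (hf : Integrable f) : Continuous (𝓕 f) :=
  VectorFourier.fourierIntegral_continuous Real.continuous_fourierChar continuous_inner hf

lemma ae_fourier_inversion {f : ℝ → ℂ} (hf : Integrable f) (h'f : Integrable (𝓕 f)) :
    f =ᵐ[volume] 𝓕⁻ (𝓕 f) := by
  have hcont : Continuous (𝓕⁻ (𝓕 f)) := by
    rw [Real.fourierInv_eq_fourier_comp_neg]
    exact cont_fourier h'f.comp_neg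
  apply ae_eq_of_integral_contDiff_smul_eq hf.locallyIntegrable hcont.locallyIntegrable
  intro g g_diff g_supp
  set ψ : 𝓢(ℝ, ℂ) := mySchwartz g g_diff g_supp with hψ
  have hψfun : ∀ x, (ψ : ℝ → ℂ) x = (g x : ℂ) := fun _ => rfl
  have hψint : Integrable (ψ : ℝ → ℂ) := ψ.integrable
  have hFψint : Integrable (𝓕 (ψ : ℝ → ℂ)) := by
    have := (SchwartzMap.fourierTransformCLM ℂ ψ).integrable (μ := volume)
    rwa [SchwartzMap.fourierTransformCLM_apply] at this
  have hFinvψint : Integrable (𝓕⁻ (ψ : ℝ → ℂ)) := by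
    have := (𝓕⁻ ψ).integrable (μ := volume)
    rwa [SchwartzMap.fourierInv_coe] at this
  have hinv : 𝓕 (𝓕⁻ (ψ : ℝ → ℂ)) = (ψ : ℝ → ℂ) :=
    ψ.continuous.fourier_fourierInv_eq hψint hFψint
  have lhs_eq : ∫ x, (ψ : ℝ → ℂ) x * f x = ∫ ξ, 𝓕⁻ (ψ : ℝ → ℂ) ξ * 𝓕 f ξ := by
    calc ∫ x, (ψ : ℝ → ℂ) x * f x = ∫ x, 𝓕 (𝓕⁻ (ψ : ℝ → ℂ)) x * f x := by rw [hinv]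
      _ = ∫ ξ, 𝓕⁻ (ψ : ℝ → ℂ) ξ * 𝓕 f ξ := fourier_flip hFinvψint hf
  have rhs_eq : ∫ x, (ψ : ℝ → ℂ) x * 𝓕⁻ (𝓕 f) x = ∫ ξ, 𝓕⁻ (ψ : ℝ → ℂ) ξ * 𝓕 f ξ := by
    calc ∫ x, (ψ : ℝ → ℂ) x * 𝓕⁻ (𝓕 f) x
        = ∫ x, 𝓕 (fun y => 𝓕 f (-y)) x * (ψ : ℝ → ℂ) x := by
          rw [← Real.fourierInv_eq_fourier_comp_neg]
          exact integral_congr_ae (Filter.Eventually.of_forall fun x => mul_comm _ _)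
      _ = ∫ ξ, 𝓕 f (-ξ) * 𝓕 (ψ : ℝ → ℂ) ξ := fourier_flip h'f.comp_neg hψint
      _ = ∫ ξ, 𝓕 f ξ * 𝓕 (ψ : ℝ → ℂ) (-ξ) := by
          rw [← integral_neg_eq_self (fun ξ => 𝓕 f ξ * 𝓕 (ψ : ℝ → ℂ) (-ξ)) volume]
          simp
      _ = ∫ ξ, 𝓕⁻ (ψ : ℝ → ℂ) ξ * 𝓕 f ξ := by
          simp_rw [Real.fourierInv_eq_fourier_neg]
          exact integral_congr_ae (Filter.Eventually.of_forall fun x => mul_comm _ _)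
  have key : ∫ x, (ψ : ℝ → ℂ) x * f x = ∫ x, (ψ : ℝ → ℂ) x * 𝓕⁻ (𝓕 f) x := by
    rw [lhs_eq, rhs_eq]
  simp only [hψfun] at key
  simpa [Complex.real_smul] using key


lemma cs2' (a b x y : ℝ) (hx : 0 ≤ x) (hy : 0 ≤ y) :
    |a| * x + |b| * y ≤ Real.sqrt (a ^ 2 + b ^ 2) * Real.sqrt (x ^ 2 + y ^ 2) := by
  rw [← Real.sqrt_mul (by positivity)]
  have h1 : 0 ≤ |a| * x + |b| * y := by positivity
  rw [show |a| * x + |b| * y = Real.sqrt ((|a| * x + |b| * y) ^ 2) from (Real.sqrt_sq h1).symm]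
  apply Real.sqrt_le_sqrt
  have := abs_nonneg a; have := abs_nonneg b
  nlinarith [sq_nonneg (|a| * y - |b| * x), sq_abs a, sq_abs b]

lemma l1_bound {F : ℝ → ℂ} {p w : ℝ → ℝ}
    (hF : AEStronglyMeasurable F volume) (hp : Continuous p) (hw : Continuous w)
    (hpnn : ∀ x, 0 ≤ p x) (hwnn : ∀ x, 0 ≤ w x)
    (hp2 : Integrable (fun x => p x ^ 2) volume) (hw2 : Integrable (fun x => w x ^ 2) volume)
    (hbound : ∀ x, ‖F x‖ ≤ p x * w x) :
    Integrable F volume ∧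
      ∫ x, ‖F x‖ ≤ Real.sqrt (∫ x, p x ^ 2) * Real.sqrt (∫ x, w x ^ 2) := by
  have hmul : Integrable (fun x => p x * w x) volume := by
    refine ((hp2.add hw2).div_const 2).mono' ((hp.mul hw).aestronglyMeasurable) ?_
    filter_upwards with x
    rw [Real.norm_of_nonneg (mul_nonneg (hpnn x) (hwnn x))]
    simp only [Pi.add_apply]
    nlinarith [sq_nonneg (p x - w x)]
  have hFint : Integrable F volume :=
    hmul.mono' hF (Filter.Eventually.of_forall hbound)
  refine ⟨hFint, ?_⟩
  have h1 : ∫ x, ‖F x‖ ≤ ∫ x, p x * w x :=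
    integral_mono hFint.norm hmul hbound
  have hpq : Real.HolderConjugate 2 2 := Real.HolderConjugate.two_two
  have hpm : MemLp p (ENNReal.ofReal 2) volume := by
    rw [show ENNReal.ofReal 2 = 2 by norm_num]
    exact (memLp_two_iff_integrable_sq hp.aestronglyMeasurable).2 hp2
  have hwm : MemLp w (ENNReal.ofReal 2) volume := by
    rw [show ENNReal.ofReal 2 = 2 by norm_num]
    exact (memLp_two_iff_integrable_sq hw.aestronglyMeasurable).2 hw2
  have h2 := integral_mul_le_Lp_mul_Lq_of_nonneg hpq
    (Filter.Eventually.of_forall hpnn) (Filter.Eventually.of_forall hwnn) hpm hwm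
  have hconv : ∀ f : ℝ → ℝ, (∫ x, f x ^ (2:ℝ)) ^ (1/2 : ℝ) = Real.sqrt (∫ x, f x ^ 2) := by
    intro f
    rw [Real.sqrt_eq_rpow]
    congr 1
    apply integral_congr_ae
    filter_upwards with x
    rw [show (2:ℝ) = ((2:ℕ):ℝ) by norm_num, Real.rpow_natCast]
  rw [hconv p, hconv w] at h2
  exact h1.trans h2

lemma gbound (ν₁ ν₂ lam₁ lam₃ lam₄ lam₆ lam₇ : ℝ) (hν₁ : 0 < ν₁) (hν₂ : 1/4 < ν₂)
    (K a b : ℝ) (ha : |a| ≤ K) (hb : |b| ≤ K) :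
    |(-(lam₃ * a ^ 2 + lam₄ * a - ν₁ * a * b - ν₁ * lam₁ * b) /
        (1 + a + lam₁ + ν₂ * (a + lam₁) ^ 2) - lam₆ * a - lam₇ * b)|
      ≤ (4 * ν₂ / (4 * ν₂ - 1)) * ((|lam₃| + ν₁) * K + (|lam₄| + ν₁ * |lam₁|)) * K
        + (|lam₆| + |lam₇|) * K := by
  have hK : 0 ≤ K := (abs_nonneg a).trans ha
  have h4 : 0 < 4 * ν₂ - 1 := by linarith
  have hν₂0 : 0 < ν₂ := by linarith
  set D := 1 + a + lam₁ + ν₂ * (a + lam₁) ^ 2 with hD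
  have hDlb : (4 * ν₂ - 1) / (4 * ν₂) ≤ D := by
    rw [div_le_iff₀ (by linarith)]
    nlinarith [sq_nonneg (2 * ν₂ * (a + lam₁) + 1)]
  have hD0 : 0 < D := lt_of_lt_of_le (by positivity) hDlb
  set N := -(lam₃ * a ^ 2 + lam₄ * a - ν₁ * a * b - ν₁ * lam₁ * b) with hN
  have hNabs : |N| ≤ (|lam₃| + ν₁) * K ^ 2 + (|lam₄| + ν₁ * |lam₁|) * K := by
    have h1 : |N| ≤ |lam₃ * a ^ 2| + |lam₄ * a| + |ν₁ * a * b| + |ν₁ * lam₁ * b| := by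
      rw [hN, abs_neg]
      calc |lam₃ * a ^ 2 + lam₄ * a - ν₁ * a * b - ν₁ * lam₁ * b|
          ≤ |lam₃ * a ^ 2 + lam₄ * a - ν₁ * a * b| + |ν₁ * lam₁ * b| := abs_sub _ _
        _ ≤ |lam₃ * a ^ 2 + lam₄ * a| + |ν₁ * a * b| + |ν₁ * lam₁ * b| := by
            gcongr; exact abs_sub _ _
        _ ≤ |lam₃ * a ^ 2| + |lam₄ * a| + |ν₁ * a * b| + |ν₁ * lam₁ * b| := by
            gcongr; exact abs_add_le _ _
    have e1 : |lam₃ * a ^ 2| ≤ |lam₃| * K ^ 2 := by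
      rw [abs_mul, abs_pow]; gcongr
    have e2 : |lam₄ * a| ≤ |lam₄| * K := by rw [abs_mul]; gcongr
    have e3 : |ν₁ * a * b| ≤ ν₁ * K ^ 2 := by
      rw [abs_mul, abs_mul, abs_of_pos hν₁]
      have : |a| * |b| ≤ K ^ 2 := by nlinarith [abs_nonneg a, abs_nonneg b]
      nlinarith
    have e4 : |ν₁ * lam₁ * b| ≤ ν₁ * |lam₁| * K := by
      rw [abs_mul, abs_mul, abs_of_pos hν₁]; gcongr
    nlinarith
  have hfrac : |N / D| ≤ (4 * ν₂ / (4 * ν₂ - 1)) * |N| := by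
    rw [abs_div, abs_of_pos hD0]
    calc |N| / D ≤ |N| / ((4 * ν₂ - 1) / (4 * ν₂)) :=
          div_le_div_of_nonneg_left (abs_nonneg _) (by positivity) hDlb
      _ = (4 * ν₂ / (4 * ν₂ - 1)) * |N| := by
          field_simp
  calc |N / D - lam₆ * a - lam₇ * b|
      ≤ |N / D| + |lam₆ * a| + |lam₇ * b| := by
        calc |N / D - lam₆ * a - lam₇ * b| ≤ |N / D - lam₆ * a| + |lam₇ * b| := abs_sub _ _
          _ ≤ |N / D| + |lam₆ * a| + |lam₇ * b| := by gcongr; exact abs_sub _ _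
    _ ≤ (4 * ν₂ / (4 * ν₂ - 1)) * ((|lam₃| + ν₁) * K ^ 2 + (|lam₄| + ν₁ * |lam₁|) * K)
        + |lam₆| * K + |lam₇| * K := by
        have e5 : |lam₆ * a| ≤ |lam₆| * K := by rw [abs_mul]; gcongr
        have e6 : |lam₇ * b| ≤ |lam₇| * K := by rw [abs_mul]; gcongr
        have h0 : (0:ℝ) ≤ 4 * ν₂ / (4 * ν₂ - 1) := by positivity
        have := hfrac.trans (by gcongr : (4 * ν₂ / (4 * ν₂ - 1)) * |N| ≤
          (4 * ν₂ / (4 * ν₂ - 1)) * ((|lam₃| + ν₁) * K ^ 2 + (|lam₄| + ν₁ * |lam₁|) * K))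
        linarith
    _ = (4 * ν₂ / (4 * ν₂ - 1)) * ((|lam₃| + ν₁) * K + (|lam₄| + ν₁ * |lam₁|)) * K
        + (|lam₆| + |lam₇|) * K := by ring

lemma inv_combo1 (s11 s12 s21 s22 : ℝ) (h : s11 * s22 - s12 * s21 ≠ 0) (F G : ℂ) :
    ((s22 / (s11 * s22 - s12 * s21) : ℝ) : ℂ) * ((s11 : ℂ) * F + (s12 : ℂ) * G)
      + ((-s12 / (s11 * s22 - s12 * s21) : ℝ) : ℂ) * ((s21 : ℂ) * F + (s22 : ℂ) * G) = F := by
  have h' : ((s11 * s22 - s12 * s21 : ℝ) : ℂ) ≠ 0 := Complex.ofReal_ne_zero.2 h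
  push_cast
  have h'' : ((s11:ℂ) * s22 - (s12:ℂ) * s21) ≠ 0 := by exact_mod_cast h'
  rw [div_mul_eq_mul_div, div_mul_eq_mul_div, ← add_div, div_eq_iff h'']
  ring

lemma inv_combo2 (s11 s12 s21 s22 : ℝ) (h : s11 * s22 - s12 * s21 ≠ 0) (F G : ℂ) :
    ((-s21 / (s11 * s22 - s12 * s21) : ℝ) : ℂ) * ((s11 : ℂ) * F + (s12 : ℂ) * G)
      + ((s11 / (s11 * s22 - s12 * s21) : ℝ) : ℂ) * ((s21 : ℂ) * F + (s22 : ℂ) * G) = G := by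
  have h' : ((s11 * s22 - s12 * s21 : ℝ) : ℂ) ≠ 0 := Complex.ofReal_ne_zero.2 h
  push_cast
  have h'' : ((s11:ℂ) * s22 - (s12:ℂ) * s21) ≠ 0 := by exact_mod_cast h'
  rw [div_mul_eq_mul_div, div_mul_eq_mul_div, ← add_div, div_eq_iff h'']
  ring

end AuxInversion


open MeasureTheory

/-- The nonlinearity `g(u)` is essentially bounded, with
`‖g(u)‖_{L^∞} ≤ ‖l⁻¹‖_{M₂}(κ₀(κ₂‖u‖_H + κ₃) + κ₄)‖u‖_H`. -/
theorem nonlinearity_Linfty_bound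
    (ν ν₁ ν₂ ν₃ lam₁ lam₃ lam₄ lam₅ lam₆ lam₇ : ℝ)
    (hν : 0 < ν) (hν₁ : 0 < ν₁) (hν₂ : 1 / 4 < ν₂) (hν₃ : 0 < ν₃)
    (hdet : ∀ ξ : ℝ, symDet ν ν₃ lam₅ lam₆ lam₇ ξ ≠ 0)
    (M₁ M₂ : ℝ)
    (hM₁ : IsM1Bound ν ν₃ lam₅ lam₆ lam₇ M₁)
    (hM₂ : IsM2Bound ν ν₃ lam₅ lam₆ lam₇ M₂)
    (κ₀ κ₂ κ₃ κ₄ : ℝ)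
    (hκ₀ : κ₀ = 4 * ν₂ / (4 * ν₂ - 1))
    (hκ₂ : κ₂ = M₂ * (|lam₃| + ν₁))
    (hκ₃ : κ₃ = |lam₄| + ν₁ * |lam₁|)
    (hκ₄ : κ₄ = |lam₆| + |lam₇|)
    (u₁ u₂ : ℝ → ℝ)
    (hu : MemH ν ν₃ lam₅ lam₆ lam₇ u₁ u₂) :
    MemLp (gfun ν₁ ν₂ lam₁ lam₃ lam₄ lam₆ lam₇ u₁ u₂) ⊤ volume ∧
      eLpNorm (gfun ν₁ ν₂ lam₁ lam₃ lam₄ lam₆ lam₇ u₁ u₂) ⊤ volume ≤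
        ENNReal.ofReal (M₂ * (κ₀ * (κ₂ * normH ν ν₃ lam₅ lam₆ lam₇ u₁ u₂ + κ₃) + κ₄) *
          normH ν ν₃ lam₅ lam₆ lam₇ u₁ u₂) := by
  obtain ⟨hu₁L2, hu₂L2, hu₁int, hu₂int, hHint⟩ := hu
  obtain ⟨hi11, hi12, hi21, hi22, hM₂1, hM₂2⟩ := hM₂
  set n := normH ν ν₃ lam₅ lam₆ lam₇ u₁ u₂ with hn
  have hn0 : 0 ≤ n := Real.sqrt_nonneg _
  have hM₂0 : 0 ≤ M₂ := (Real.sqrt_nonneg _).trans hM₂1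
  have hcd : Continuous (symDet ν ν₃ lam₅ lam₆ lam₇) := by unfold symDet sym11 sym22; fun_prop
  have hc11 : Continuous (inv11 ν ν₃ lam₅ lam₆ lam₇) := by
    unfold inv11; exact Continuous.div (by unfold sym22; fun_prop) hcd hdet
  have hc12 : Continuous (inv12 ν ν₃ lam₅ lam₆ lam₇) := by
    unfold inv12; exact Continuous.div (by fun_prop) hcd hdet
  have hc21 : Continuous (inv21 ν ν₃ lam₅ lam₆ lam₇) := by
    unfold inv21; exact Continuous.div (by fun_prop) hcd hdet
  have hc22 : Continuous (inv22 ν ν₃ lam₅ lam₆ lam₇) := by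
    unfold inv22; exact Continuous.div (by unfold sym11; fun_prop) hcd hdet
  have hF₁c : Continuous (rhat u₁) := cont_fourier (f := fun x => (u₁ x : ℂ)) hu₁int.ofReal
  have hF₂c : Continuous (rhat u₂) := cont_fourier (f := fun x => (u₂ x : ℂ)) hu₂int.ofReal
  have hHnn : ∀ ξ, 0 ≤ Hintegrand ν ν₃ lam₅ lam₆ lam₇ u₁ u₂ ξ := by
    intro ξ; unfold Hintegrand; positivity
  set v₁ : ℝ → ℂ := fun ξ => (sym11 ν lam₆ ξ : ℂ) * rhat u₁ ξ + (lam₇ : ℂ) * rhat u₂ ξ with hv₁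
  set v₂ : ℝ → ℂ := fun ξ => (lam₅ : ℂ) * rhat u₁ ξ + (sym22 ν₃ ξ : ℂ) * rhat u₂ ξ with hv₂
  have hHeq : ∀ ξ, Hintegrand ν ν₃ lam₅ lam₆ lam₇ u₁ u₂ ξ = ‖v₁ ξ‖ ^ 2 + ‖v₂ ξ‖ ^ 2 :=
    fun ξ => rfl
  set w : ℝ → ℝ := fun ξ => Real.sqrt (Hintegrand ν ν₃ lam₅ lam₆ lam₇ u₁ u₂ ξ) with hwdef
  have hwc : Continuous w := by
    apply Real.continuous_sqrt.comp
    have h1 : Continuous (fun ξ : ℝ => (sym11 ν lam₆ ξ : ℂ)) := by unfold sym11; fun_prop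
    have h2 : Continuous (fun ξ : ℝ => (sym22 ν₃ ξ : ℂ)) := by unfold sym22; fun_prop
    unfold Hintegrand
    fun_prop
  have hw2 : Integrable (fun ξ => w ξ ^ 2) volume := by
    have he : (fun ξ => w ξ ^ 2) = Hintegrand ν ν₃ lam₅ lam₆ lam₇ u₁ u₂ :=
      funext fun ξ => Real.sq_sqrt (hHnn ξ)
    rw [he]; exact hHint
  have hintw2 : Real.sqrt (∫ ξ, w ξ ^ 2) = n := by
    rw [hn]
    unfold normH
    congr 1
    apply integral_congr_ae
    filter_upwards with ξ
    exact Real.sq_sqrt (hHnn ξ)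
  have main : ∀ (F : ℝ → ℂ) (c d : ℝ → ℝ), Continuous F → Continuous c → Continuous d →
      Integrable (fun ξ => c ξ ^ 2) volume → Integrable (fun ξ => d ξ ^ 2) volume →
      (∀ ξ, F ξ = (c ξ : ℂ) * v₁ ξ + (d ξ : ℂ) * v₂ ξ) →
      Real.sqrt ((∫ ξ, c ξ ^ 2) + ∫ ξ, d ξ ^ 2) ≤ M₂ →
      Integrable F volume ∧ ∫ ξ, ‖F ξ‖ ≤ M₂ * n := by
    intro F c d hFc hcc hdc hc2 hd2 hid hsle
    set p : ℝ → ℝ := fun ξ => Real.sqrt (c ξ ^ 2 + d ξ ^ 2) with hpdef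
    have hpc : Continuous p := by fun_prop
    have hp2 : Integrable (fun ξ => p ξ ^ 2) volume := by
      have he : (fun ξ => p ξ ^ 2) = fun ξ => c ξ ^ 2 + d ξ ^ 2 :=
        funext fun ξ => Real.sq_sqrt (by positivity)
      rw [he]; exact hc2.add hd2
    have hbound : ∀ ξ, ‖F ξ‖ ≤ p ξ * w ξ := by
      intro ξ
      rw [hid ξ]
      calc ‖(c ξ : ℂ) * v₁ ξ + (d ξ : ℂ) * v₂ ξ‖
          ≤ ‖(c ξ : ℂ) * v₁ ξ‖ + ‖(d ξ : ℂ) * v₂ ξ‖ := norm_add_le _ _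
        _ = |c ξ| * ‖v₁ ξ‖ + |d ξ| * ‖v₂ ξ‖ := by
            rw [norm_mul, norm_mul, Complex.norm_real, Complex.norm_real,
              Real.norm_eq_abs, Real.norm_eq_abs]
        _ ≤ Real.sqrt (c ξ ^ 2 + d ξ ^ 2) * Real.sqrt (‖v₁ ξ‖ ^ 2 + ‖v₂ ξ‖ ^ 2) :=
            cs2' _ _ _ _ (norm_nonneg _) (norm_nonneg _)
        _ = p ξ * w ξ := by rw [hpdef, hwdef]; simp only [hHeq ξ]
    obtain ⟨hFint, hineq⟩ := l1_bound hFc.aestronglyMeasurable hpc hwc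
      (fun ξ => Real.sqrt_nonneg _) (fun ξ => Real.sqrt_nonneg _) hp2 hw2 hbound
    refine ⟨hFint, hineq.trans ?_⟩
    have hps : Real.sqrt (∫ ξ, p ξ ^ 2) ≤ M₂ := by
      have he : ∫ ξ, p ξ ^ 2 = (∫ ξ, c ξ ^ 2) + ∫ ξ, d ξ ^ 2 := by
        rw [← integral_add hc2 hd2]
        apply integral_congr_ae
        filter_upwards with ξ
        exact Real.sq_sqrt (by positivity)
      rw [he]; exact hsle
    rw [hintw2]
    exact mul_le_mul_of_nonneg_right hps (Real.sqrt_nonneg _) |>.trans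
      (le_of_eq rfl) |>.trans (by rw [hintw2] at *; exact le_rfl)
  have key₁ := main (rhat u₁) (inv11 ν ν₃ lam₅ lam₆ lam₇) (inv12 ν ν₃ lam₅ lam₆ lam₇)
    hF₁c hc11 hc12 hi11 hi12
    (fun ξ => (inv_combo1 (sym11 ν lam₆ ξ) lam₇ lam₅ (sym22 ν₃ ξ)
      (hdet ξ) (rhat u₁ ξ) (rhat u₂ ξ)).symm) hM₂1
  have key₂ := main (rhat u₂) (inv21 ν ν₃ lam₅ lam₆ lam₇) (inv22 ν ν₃ lam₅ lam₆ lam₇)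
    hF₂c hc21 hc22 hi21 hi22
    (fun ξ => (inv_combo2 (sym11 ν lam₆ ξ) lam₇ lam₅ (sym22 ν₃ ξ)
      (hdet ξ) (rhat u₁ ξ) (rhat u₂ ξ)).symm) hM₂2
  have habs : ∀ (u : ℝ → ℝ), Integrable u volume → Integrable (rhat u) volume →
      (∫ ξ, ‖rhat u ξ‖) ≤ M₂ * n → ∀ᵐ x, |u x| ≤ M₂ * n := by
    intro u huint hFi hL1
    have hae := ae_fourier_inversion (f := fun x => (u x : ℂ)) huint.ofReal hFi
    filter_upwards [hae] with x hx
    calc |u x| = ‖((u x : ℝ) : ℂ)‖ := by simp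
      _ = ‖𝓕⁻ (rhat u) x‖ := congrArg norm hx
      _ ≤ ∫ ξ, ‖rhat u ξ‖ :=
          VectorFourier.norm_fourierIntegral_le_integral_norm 𝐞 volume (-innerₗ ℝ) (rhat u) x
      _ ≤ M₂ * n := hL1
  have habs₁ := habs u₁ hu₁int key₁.1 key₁.2
  have habs₂ := habs u₂ hu₂int key₂.1 key₂.2
  have hden : ∀ q : ℝ × ℝ, 1 + q.1 + lam₁ + ν₂ * (q.1 + lam₁) ^ 2 ≠ 0 := by
    intro q
    have : 0 < 1 + q.1 + lam₁ + ν₂ * (q.1 + lam₁) ^ 2 := by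
      nlinarith [sq_nonneg (2 * ν₂ * (q.1 + lam₁) + 1), sq_nonneg (q.1 + lam₁)]
    exact ne_of_gt this
  have hΦ : Continuous (fun q : ℝ × ℝ =>
      -(lam₃ * q.1 ^ 2 + lam₄ * q.1 - ν₁ * q.1 * q.2 - ν₁ * lam₁ * q.2) /
        (1 + q.1 + lam₁ + ν₂ * (q.1 + lam₁) ^ 2) - lam₆ * q.1 - lam₇ * q.2) := by
    apply Continuous.sub (Continuous.sub ?_ (by fun_prop)) (by fun_prop)
    exact Continuous.div (by fun_prop) (by fun_prop) hden
  have hgm : AEStronglyMeasurable (gfun ν₁ ν₂ lam₁ lam₃ lam₄ lam₆ lam₇ u₁ u₂) volume := by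
    have := hΦ.comp_aestronglyMeasurable
      ((hu₁L2.aestronglyMeasurable).prodMk (hu₂L2.aestronglyMeasurable))
    exact this
  set C := M₂ * (κ₀ * (κ₂ * n + κ₃) + κ₄) * n with hC
  have hCb : ∀ᵐ x, ‖gfun ν₁ ν₂ lam₁ lam₃ lam₄ lam₆ lam₇ u₁ u₂ x‖ ≤ C := by
    filter_upwards [habs₁, habs₂] with x h1 h2
    rw [Real.norm_eq_abs]
    have hgb := gbound ν₁ ν₂ lam₁ lam₃ lam₄ lam₆ lam₇ hν₁ hν₂ (M₂ * n) (u₁ x) (u₂ x) h1 h2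
    refine le_trans (le_of_eq rfl) (hgb.trans (le_of_eq ?_))
    rw [hC, hκ₀, hκ₂, hκ₃, hκ₄]
    ring
  refine ⟨memLp_top_of_bound hgm _ hCb, ?_⟩
  rw [eLpNorm_exponent_top]
  exact eLpNormEssSup_le_of_ae_bound hCb
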